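/- Let α > 0. Then limsup_{n→∞} sup_{x ∈ [0,2n]} | T₂ₙ₊₁(x/(2n)) · H₁(α,x) | ≤ sup_{x ∈ [0,∞)} | H(α,x) |, where T₂ₙ₊₁ is the Chebyshev polynomial of the first kind of degree 2n+1, H₁(α,x) = ∫₀^∞ (t^α / sinh t) · x/(x² + t²) dt and H(α,x) = ∫₀^∞ (t^α / sinh t) · (x · sin x)/(x² + t²) dt. -/

import Mathlib

open MeasureTheory Filter Real

/-- `H(α,x) = ∫₀^∞ (t^α / sinh t) · (x·sin x)/(x²+t²) dt`. -/
noncomputable def Hfun (α x : ℝ) : ℝ :=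
  ∫ t in Set.Ioi (0:ℝ), t ^ α / Real.sinh t * (x * Real.sin x / (x ^ 2 + t ^ 2))

/-- `H₁(α,x) = ∫₀^∞ (t^α / sinh t) · x/(x²+t²) dt`. -/
noncomputable def H1fun (α x : ℝ) : ℝ :=
  ∫ t in Set.Ioi (0:ℝ), t ^ α / Real.sinh t * (x / (x ^ 2 + t ^ 2))

lemma my_abs_sin_le_abs (y : ℝ) : |Real.sin y| ≤ |y| := by
  wlog hy : 0 ≤ y with H
  · have h := H (-y) (by linarith)
    simpa using h
  rw [abs_of_nonneg hy]
  rcases eq_or_lt_of_le hy with h | h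
  · simp [← h]
  rw [abs_le]
  refine ⟨?_, (Real.sin_lt h).le⟩
  rcases le_or_gt 1 y with h1 | h1
  · nlinarith [Real.neg_one_le_sin y]
  · have := Real.sin_pos_of_pos_of_lt_pi h (by nlinarith [Real.pi_gt_three])
    linarith

lemma my_abs_sin_sub_sin (a b : ℝ) : |Real.sin a - Real.sin b| ≤ |a - b| := by
  rw [Real.sin_sub_sin]
  have h1 : |Real.sin ((a - b) / 2)| ≤ |(a - b) / 2| := my_abs_sin_le_abs _
  have h2 : |Real.cos ((a + b) / 2)| ≤ 1 := Real.abs_cos_le_one _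
  rw [abs_mul, abs_mul]
  have h3 : |2| * |Real.sin ((a - b) / 2)| * |Real.cos ((a + b) / 2)| ≤ 2 * |(a - b) / 2| * 1 := by
    rw [abs_two]
    gcongr
  have h4 : |(a - b) / 2| = |a - b| / 2 := by rw [abs_div]; norm_num
  rw [h4] at h3
  linarith

lemma my_arcsin_le (u : ℝ) (h0 : 0 ≤ u) (h1 : u ≤ 1) : Real.arcsin u ≤ π / 2 * u := by
  have h := Real.mul_le_sin (Real.arcsin_nonneg.2 h0) (Real.arcsin_le_pi_div_two u)
  rw [Real.sin_arcsin (by linarith) h1] at h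
  have hπ : 0 < π := Real.pi_pos
  have h2 := mul_le_mul_of_nonneg_left h (by positivity : (0:ℝ) ≤ π / 2)
  calc Real.arcsin u = π / 2 * (2 / π * Real.arcsin u) := by field_simp
    _ ≤ π / 2 * u := h2

lemma my_self_le_arcsin (u : ℝ) (h0 : 0 ≤ u) (h1 : u ≤ 1) : u ≤ Real.arcsin u := by
  have h := Real.sin_le (Real.arcsin_nonneg.2 h0)
  rwa [Real.sin_arcsin (by linarith) h1] at h

lemma my_arcsin_sub_le (u : ℝ) (h0 : 0 ≤ u) (h1 : u ≤ 1 / 2) :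
    Real.arcsin u - u ≤ u ^ 3 := by
  rcases eq_or_lt_of_le h0 with h | h
  · simp [← h]
  have hπ : π < 3.15 := Real.pi_lt_d2
  have hπ0 : 0 < π := Real.pi_pos
  have harc : Real.arcsin u ≤ π / 2 * u := my_arcsin_le u h0 (by linarith)
  have hy0 : 0 < Real.arcsin u := Real.arcsin_pos.2 h
  have hy1 : Real.arcsin u ≤ 1 := by nlinarith
  have hs := Real.sin_gt_sub_cube hy0
  rw [Real.sin_arcsin (by linarith) (by linarith)] at hs
  have h3 : Real.arcsin u ^ 3 ≤ (π / 2 * u) ^ 3 := by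
    apply pow_le_pow_left₀ hy0.le harc
  have hm : (π / 2 * u) ^ 3 = (π / 2) ^ 3 * u ^ 3 := mul_pow _ _ _
  have hπ3 : (π / 2) ^ 3 ≤ 4 := by
    have hc : π ^ 3 < 3.15 ^ 3 := pow_lt_pow_left₀ hπ hπ0.le (by norm_num)
    have : (π / 2) ^ 3 = π ^ 3 / 2 ^ 3 := div_pow _ _ _
    rw [this]
    norm_num
    nlinarith
  rw [hm] at h3
  have hfin : (π / 2) ^ 3 * u ^ 3 ≤ 4 * u ^ 3 :=
    mul_le_mul_of_nonneg_right hπ3 (pow_pos h 3).le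
  linarith [pow_pos h 3]

lemma my_cheb_abs (n : ℕ) {u : ℝ} (h0 : 0 ≤ u) (h1 : u ≤ 1) :
    |(Polynomial.Chebyshev.T ℝ (2 * n + 1)).eval u|
      = |Real.sin ((2 * (n : ℝ) + 1) * Real.arcsin u)| := by
  have hu : Real.cos (Real.arccos u) = u := Real.cos_arccos (by linarith) h1
  conv_lhs => rw [← hu]
  rw [Polynomial.Chebyshev.T_real_cos, Real.arccos_eq_pi_div_two_sub_arcsin]
  have hcast : ((2 * (n : ℤ) + 1 : ℤ) : ℝ) * (π / 2 - Real.arcsin u)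
      = (n : ℝ) * π - ((2 * (n : ℝ) + 1) * Real.arcsin u - π / 2) := by
    push_cast; ring
  rw [hcast, Real.cos_nat_mul_pi_sub, Real.cos_sub_pi_div_two]
  rw [abs_mul, abs_pow, abs_neg, abs_one, one_pow, one_mul]

lemma my_contOn_g (γ : ℝ) : ContinuousOn (fun t : ℝ => t ^ γ / Real.sinh t) (Set.Ioi 0) := by
  intro t ht
  have ht0 : (0:ℝ) < t := ht
  exact ((Real.continuousAt_rpow_const t γ (Or.inl ht0.ne')).div
    Real.continuous_sinh.continuousAt (Real.sinh_pos_iff.2 ht0).ne').continuousWithinAt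

lemma my_integrableOn_g {γ : ℝ} (hγ : 0 < γ) :
    IntegrableOn (fun t : ℝ => t ^ γ / Real.sinh t) (Set.Ioi 0) := by
  have hsplit : Set.Ioc (0:ℝ) 1 ∪ Set.Ioi (1:ℝ) = Set.Ioi 0 :=
    Set.Ioc_union_Ioi_eq_Ioi zero_le_one
  rw [← hsplit]
  apply IntegrableOn.union
  · -- on Ioc 0 1, dominate by t ^ (γ - 1)
    have hdom : IntegrableOn (fun t : ℝ => t ^ (γ - 1)) (Set.Ioc 0 1) := by
      have := intervalIntegral.intervalIntegrable_rpow' (r := γ - 1) (a := 0) (b := 1) (by linarith)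
      rwa [intervalIntegrable_iff_integrableOn_Ioc_of_le zero_le_one] at this
    apply Integrable.mono' hdom
    · exact ((my_contOn_g γ).mono (Set.Ioc_subset_Ioi_self)).aestronglyMeasurable
        measurableSet_Ioc
    · rw [ae_restrict_iff' measurableSet_Ioc]
      filter_upwards with t ht
      have ht0 : 0 < t := ht.1
      have hsinh : 0 < Real.sinh t := Real.sinh_pos_iff.2 ht0
      rw [Real.norm_eq_abs, abs_of_nonneg (by positivity)]
      have h1 : t ^ γ / Real.sinh t ≤ t ^ γ / t :=
        div_le_div_of_nonneg_left (by positivity) ht0 (Real.self_le_sinh_iff.2 ht0.le)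
      have h2 : t ^ γ / t = t ^ (γ - 1) := by
        rw [Real.rpow_sub_one ht0.ne']
      linarith
  · -- on Ioi 1, dominate by 4 * (exp (-t) * t ^ γ)
    have hdom : IntegrableOn (fun t : ℝ => 4 * (Real.exp (-t) * t ^ ((γ + 1) - 1)))
        (Set.Ioi 1) := by
      exact ((Real.GammaIntegral_convergent (by linarith)).mono_set
        (Set.Ioi_subset_Ioi zero_le_one)).const_mul 4
    apply Integrable.mono' hdom
    · exact ((my_contOn_g γ).mono (Set.Ioi_subset_Ioi zero_le_one)).aestronglyMeasurable
        measurableSet_Ioi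
    · rw [ae_restrict_iff' measurableSet_Ioi]
      filter_upwards with t ht
      have ht1 : (1:ℝ) ≤ t := le_of_lt ht
      have ht0 : 0 < t := lt_of_lt_of_le one_pos ht1
      have hsinh : 0 < Real.sinh t := Real.sinh_pos_iff.2 ht0
      rw [Real.norm_eq_abs, abs_of_nonneg (by positivity)]
      have hexp2 : (2:ℝ) ≤ Real.exp t := by
        calc (2:ℝ) = 1 + 1 := by norm_num
        _ ≤ 1 + t := by linarith
        _ ≤ Real.exp t := by linarith [Real.add_one_le_exp t]
      have hexpneg : Real.exp (-t) ≤ 1 := Real.exp_le_one_iff.2 (by linarith)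
      have hsinh4 : Real.exp t / 4 ≤ Real.sinh t := by
        rw [Real.sinh_eq]
        rw [Real.exp_neg]
        have hinv : (Real.exp t)⁻¹ ≤ Real.exp t / 2 := by
          rw [inv_le_iff_one_le_mul₀ (Real.exp_pos t)]
          nlinarith [Real.exp_pos t]
        linarith
      have key : t ^ γ / Real.sinh t ≤ t ^ γ / (Real.exp t / 4) :=
        div_le_div_of_nonneg_left (by positivity) (by positivity) hsinh4
      have : t ^ γ / (Real.exp t / 4) = 4 * (Real.exp (-t) * t ^ ((γ + 1) - 1)) := by
        rw [Real.exp_neg]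
        have : (γ + 1) - 1 = γ := by ring
        rw [this]
        field_simp
      linarith [key, this ▸ key]

lemma my_int_H1 {α : ℝ} (hα : 0 < α) {x : ℝ} (hx : 0 < x) :
    IntegrableOn (fun t : ℝ => t ^ α / Real.sinh t * (x / (x ^ 2 + t ^ 2)))
      (Set.Ioi 0) := by
  have hb : Integrable (fun t : ℝ => (x / (x ^ 2 + t ^ 2)) * (t ^ α / Real.sinh t))
      (volume.restrict (Set.Ioi 0)) := by
    apply Integrable.bdd_mul (c := 1 / x) (my_integrableOn_g hα)
    · exact (continuous_const.div (by continuity) fun t => by positivity).aestronglyMeasurable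
    · refine ae_of_all _ fun t => ?_
      rw [Real.norm_eq_abs, abs_of_nonneg (by positivity)]
      rw [div_le_div_iff₀ (by positivity) hx]
      nlinarith [sq_nonneg t]
  have he : (fun t : ℝ => t ^ α / Real.sinh t * (x / (x ^ 2 + t ^ 2)))
      = fun t : ℝ => (x / (x ^ 2 + t ^ 2)) * (t ^ α / Real.sinh t) := by
    funext t; ring
  rw [IntegrableOn, he]
  exact hb

lemma my_H1_nonneg (α : ℝ) {x : ℝ} (hx : 0 ≤ x) : 0 ≤ H1fun α x := by
  apply setIntegral_nonneg measurableSet_Ioi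
  intro t ht
  have ht' : 0 < t := ht
  have hs : 0 < Real.sinh t := Real.sinh_pos_iff.2 ht'
  apply mul_nonneg (div_nonneg (Real.rpow_nonneg ht'.le _) hs.le)
    (div_nonneg hx (by positivity))

lemma my_H1_zero (α : ℝ) : H1fun α 0 = 0 := by
  simp [H1fun]

lemma my_Hfun_zero (α : ℝ) : Hfun α 0 = 0 := by
  simp [Hfun]

lemma my_Hfun_eq (α x : ℝ) : Hfun α x = Real.sin x * H1fun α x := by
  rw [Hfun, H1fun, ← integral_const_mul]
  congr 1
  funext t
  ring

lemma my_H1_le {α : ℝ} (hα : 0 < α) {x : ℝ} (hx : 0 < x) :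
    H1fun α x ≤ (∫ t in Set.Ioi (0:ℝ), t ^ α / Real.sinh t) / x := by
  rw [← integral_div, H1fun]
  apply setIntegral_mono_on (my_int_H1 hα hx) ((my_integrableOn_g hα).div_const x)
    measurableSet_Ioi
  intro t ht
  have ht' : 0 < t := ht
  have hs : 0 < Real.sinh t := Real.sinh_pos_iff.2 ht'
  have hfrac : x / (x ^ 2 + t ^ 2) ≤ 1 / x := by
    rw [div_le_div_iff₀ (by positivity) hx]
    nlinarith [sq_nonneg t]
  calc t ^ α / Real.sinh t * (x / (x ^ 2 + t ^ 2))
      ≤ t ^ α / Real.sinh t * (1 / x) :=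
        mul_le_mul_of_nonneg_left hfrac (by positivity)
    _ = t ^ α / Real.sinh t / x := by ring

lemma my_young {β x t : ℝ} (hβ0 : 0 < β) (hβ2 : β ≤ 2) (hx : 0 ≤ x) (ht : 0 < t) :
    t ^ β * x ^ 2 ≤ x ^ β * (x ^ 2 + t ^ 2) := by
  rcases eq_or_lt_of_le hx with h | hx0
  · rw [← h]
    simp
    positivity
  have hxβ : 0 ≤ x ^ β := Real.rpow_nonneg hx0.le _
  rcases le_total x t with hxt | htx
  · have e1 : x ^ β * x ^ (2 - β) = x ^ 2 := by
      rw [← Real.rpow_add hx0, ← Real.rpow_natCast x 2]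
      norm_num
    have e2 : t ^ β * t ^ (2 - β) = t ^ 2 := by
      rw [← Real.rpow_add ht, ← Real.rpow_natCast t 2]
      norm_num
    have h3 : x ^ (2 - β) ≤ t ^ (2 - β) := Real.rpow_le_rpow hx0.le hxt (by linarith)
    calc t ^ β * x ^ 2 = x ^ β * (t ^ β * x ^ (2 - β)) := by rw [← e1]; ring
      _ ≤ x ^ β * (t ^ β * t ^ (2 - β)) := by
          apply mul_le_mul_of_nonneg_left _ hxβ
          exact mul_le_mul_of_nonneg_left h3 (Real.rpow_nonneg ht.le _)
      _ = x ^ β * t ^ 2 := by rw [e2]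
      _ ≤ x ^ β * (x ^ 2 + t ^ 2) := by nlinarith [sq_nonneg x]
  · have h3 : t ^ β ≤ x ^ β := Real.rpow_le_rpow ht.le htx hβ0.le
    have h4 : t ^ β * x ^ 2 ≤ x ^ β * x ^ 2 := mul_le_mul_of_nonneg_right h3 (sq_nonneg x)
    nlinarith [sq_nonneg t]

lemma my_xH1_le {α β : ℝ} (hα : 0 < α) (hβ0 : 0 < β) (hβ2 : β ≤ 2) (hβα : β < α)
    {x : ℝ} (hx : 0 < x) :
    x * H1fun α x ≤ (∫ t in Set.Ioi (0:ℝ), t ^ (α - β) / Real.sinh t) * x ^ β := by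
  rw [H1fun, ← integral_const_mul, ← integral_mul_const]
  apply setIntegral_mono_on ((my_int_H1 hα hx).const_mul x)
    ((my_integrableOn_g (by linarith : (0:ℝ) < α - β)).mul_const _) measurableSet_Ioi
  intro t ht
  have ht' : 0 < t := ht
  have hs : 0 < Real.sinh t := Real.sinh_pos_iff.2 ht'
  have key : t ^ α * x ^ 2 ≤ t ^ (α - β) * x ^ β * (x ^ 2 + t ^ 2) := by
    have e : t ^ α = t ^ (α - β) * t ^ β := by
      rw [← Real.rpow_add ht']
      congr 1
      ring
    rw [e]
    have hy := my_young hβ0 hβ2 hx.le ht'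
    calc t ^ (α - β) * t ^ β * x ^ 2 = t ^ (α - β) * (t ^ β * x ^ 2) := by ring
      _ ≤ t ^ (α - β) * (x ^ β * (x ^ 2 + t ^ 2)) :=
          mul_le_mul_of_nonneg_left hy (Real.rpow_nonneg ht'.le _)
      _ = t ^ (α - β) * x ^ β * (x ^ 2 + t ^ 2) := by ring
  have h2 : x * (t ^ α / Real.sinh t * (x / (x ^ 2 + t ^ 2)))
      = t ^ α * x ^ 2 / (Real.sinh t * (x ^ 2 + t ^ 2)) := by
    field_simp
  have h3 : t ^ (α - β) / Real.sinh t * x ^ β = t ^ (α - β) * x ^ β / Real.sinh t := by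
    ring
  rw [h2, h3, div_le_div_iff₀ (by positivity) hs]
  nlinarith [mul_le_mul_of_nonneg_left key hs.le]

lemma my_T_le_one (n : ℕ) {u : ℝ} (h0 : 0 ≤ u) (h1 : u ≤ 1) :
    |(Polynomial.Chebyshev.T ℝ (2 * n + 1)).eval u| ≤ 1 := by
  rw [my_cheb_abs n h0 h1]
  exact abs_le.2 ⟨Real.neg_one_le_sin _, Real.sin_le_one _⟩

lemma my_T_le_3x {n : ℕ} (hn : 1 ≤ n) {x : ℝ} (hx0 : 0 ≤ x) (hx : x ≤ 2 * n) :
    |(Polynomial.Chebyshev.T ℝ (2 * n + 1)).eval (x / (2 * n))| ≤ 3 * x := by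
  have hn' : (1:ℝ) ≤ (n:ℝ) := by exact_mod_cast hn
  have h2n : (0:ℝ) < 2 * n := by linarith
  set u := x / (2 * (n:ℝ)) with hu
  have hu0 : 0 ≤ u := by positivity
  have hu1 : u ≤ 1 := by rw [hu, div_le_one h2n]; exact hx
  rw [my_cheb_abs n hu0 hu1]
  have harc0 : 0 ≤ Real.arcsin u := Real.arcsin_nonneg.2 hu0
  have h1 : |Real.sin ((2 * (n:ℝ) + 1) * Real.arcsin u)| ≤ (2 * (n:ℝ) + 1) * Real.arcsin u := by
    have h := my_abs_sin_le_abs ((2 * (n:ℝ) + 1) * Real.arcsin u)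
    rwa [abs_of_nonneg (mul_nonneg (by positivity) harc0)] at h
  have h2 : Real.arcsin u ≤ π / 2 * u := my_arcsin_le u hu0 hu1
  have hπ : π < 3.15 := Real.pi_lt_d2
  have hπ0 : 0 < π := Real.pi_pos
  have hd : u * (2 * (n:ℝ)) = x := div_mul_cancel₀ x h2n.ne'
  clear_value u
  have h3 : (2 * (n:ℝ) + 1) * Real.arcsin u ≤ (2 * (n:ℝ) + 1) * (π / 2 * u) :=
    mul_le_mul_of_nonneg_left h2 (by positivity)
  have h4 : (2 * (n:ℝ) + 1) * (π / 2 * u) ≤ 3 * x := by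
    rw [← hd]
    nlinarith [mul_nonneg hu0 (by linarith : (0:ℝ) ≤ (n:ℝ) - 1), hu0]
  linarith

lemma my_T_le_sin {n : ℕ} (hn : 1 ≤ n) {x M : ℝ} (hx0 : 0 < x) (hxM : x ≤ M)
    (hMn : M ≤ (n:ℝ)) :
    |(Polynomial.Chebyshev.T ℝ (2 * n + 1)).eval (x / (2 * n))|
      ≤ |Real.sin x| + (M ^ 3 + M) / (n:ℝ) := by
  have hn' : (1:ℝ) ≤ (n:ℝ) := by exact_mod_cast hn
  have h2n : (0:ℝ) < 2 * n := by linarith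
  have hM0 : 0 < M := lt_of_lt_of_le hx0 hxM
  set u := x / (2 * (n:ℝ)) with hu
  have hu0 : 0 ≤ u := by positivity
  have hu12 : u ≤ 1 / 2 := by
    rw [hu, div_le_iff₀ h2n]
    linarith
  have hd : u * (2 * (n:ℝ)) = x := by
    rw [hu]
    exact div_mul_cancel₀ x h2n.ne'
  have huM : u ≤ M / (2 * (n:ℝ)) := by
    rw [hu]
    gcongr
  clear_value u
  rw [my_cheb_abs n hu0 (by linarith)]
  set A := (2 * (n:ℝ) + 1) * Real.arcsin u with hA
  have hlip : |Real.sin A| ≤ |Real.sin x| + |A - x| := by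
    have h := my_abs_sin_sub_sin A x
    calc |Real.sin A| = |Real.sin x + (Real.sin A - Real.sin x)| := by ring_nf
      _ ≤ |Real.sin x| + |Real.sin A - Real.sin x| := abs_add_le _ _
      _ ≤ |Real.sin x| + |A - x| := by linarith
  have hself : u ≤ Real.arcsin u := my_self_le_arcsin u hu0 (by linarith)
  have hAx : A - x = (2 * (n:ℝ) + 1) * (Real.arcsin u - u) + u := by
    rw [hA]
    linear_combination hd
  have hAge : 0 ≤ A - x := by
    rw [hAx]
    have : 0 ≤ Real.arcsin u - u := by linarith
    positivity
  rw [abs_of_nonneg hAge] at hlip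
  have hcube : Real.arcsin u - u ≤ u ^ 3 := my_arcsin_sub_le u hu0 hu12
  have h3 : u ^ 3 ≤ (M / (2 * (n:ℝ))) ^ 3 := pow_le_pow_left₀ hu0 huM 3
  have e1 : (M / (2 * (n:ℝ))) ^ 3 = M ^ 3 / (8 * (n:ℝ) ^ 3) := by
    rw [div_pow]
    ring_nf
  have hA1 : (2 * (n:ℝ) + 1) * (Real.arcsin u - u) ≤ (2 * (n:ℝ) + 1) * (M ^ 3 / (8 * (n:ℝ) ^ 3)) := by
    apply mul_le_mul_of_nonneg_left _ (by positivity)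
    calc Real.arcsin u - u ≤ u ^ 3 := hcube
      _ ≤ (M / (2 * (n:ℝ))) ^ 3 := h3
      _ = M ^ 3 / (8 * (n:ℝ) ^ 3) := e1
  have hA2 : (2 * (n:ℝ) + 1) * (M ^ 3 / (8 * (n:ℝ) ^ 3)) ≤ M ^ 3 / (n:ℝ) := by
    rw [mul_div_assoc', div_le_div_iff₀ (by positivity) (by positivity)]
    have h8 : (2 * (n:ℝ) + 1) * (n:ℝ) ≤ 8 * (n:ℝ) ^ 3 := by
      nlinarith [mul_nonneg (mul_nonneg (by linarith : (0:ℝ) ≤ (n:ℝ))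
        (by linarith : (0:ℝ) ≤ 2 * (n:ℝ) - 1)) (by linarith : (0:ℝ) ≤ 4 * (n:ℝ) + 1)]
    nlinarith [mul_le_mul_of_nonneg_left h8 (pow_nonneg hM0.le 3)]
  have hA3 : u ≤ M / (n:ℝ) := by
    apply huM.trans
    apply div_le_div_of_nonneg_left hM0.le (by linarith) (by linarith)
  have hsum : A - x ≤ (M ^ 3 + M) / (n:ℝ) := by
    rw [hAx, add_div]
    linarith
  linarith

set_option maxHeartbeats 1000000 in
theorem stmt_8 (α : ℝ) (hα : 0 < α) :
    Filter.limsup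
      (fun n : ℕ => ⨆ x : Set.Icc (0:ℝ) (2 * (n : ℝ)),
        |(Polynomial.Chebyshev.T ℝ (2 * n + 1)).eval ((x : ℝ) / (2 * n)) * H1fun α (x : ℝ)|)
      atTop
    ≤ ⨆ x : Set.Ici (0:ℝ), |Hfun α (x : ℝ)| := by
  set S := ⨆ x : Set.Ici (0:ℝ), |Hfun α (x : ℝ)| with hS
  have hS0 : 0 ≤ S := Real.iSup_nonneg fun _ => abs_nonneg _
  set β := min 1 (α / 2) with hβ
  have hβ0 : 0 < β := lt_min one_pos (by linarith)
  have hβ2 : β ≤ 2 := (min_le_left _ _).trans one_le_two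
  have hβα : β < α := lt_of_le_of_lt (min_le_right _ _) (by linarith)
  set C := ∫ t in Set.Ioi (0:ℝ), t ^ α / Real.sinh t with hC
  set Cβ := ∫ t in Set.Ioi (0:ℝ), t ^ (α - β) / Real.sinh t with hCβ
  have hgpos : ∀ γ : ℝ, 0 ≤ ∫ t in Set.Ioi (0:ℝ), t ^ γ / Real.sinh t := by
    intro γ
    apply setIntegral_nonneg measurableSet_Ioi
    intro t ht
    have ht' : 0 < t := ht
    have hs : 0 < Real.sinh t := Real.sinh_pos_iff.2 ht'
    exact div_nonneg (Real.rpow_nonneg ht'.le _) hs.le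
  have hC0 : 0 ≤ C := hgpos α
  have hCβ0 : 0 ≤ Cβ := hgpos (α - β)
  have habs : ∀ y : ℝ, 0 ≤ y → |Hfun α y| ≤ max C Cβ := by
    intro y hy
    rcases eq_or_lt_of_le hy with h | hy0
    · rw [← h, my_Hfun_zero, abs_zero]
      exact le_max_of_le_left hC0
    have hH1 : 0 ≤ H1fun α y := my_H1_nonneg α hy
    rw [my_Hfun_eq, abs_mul, abs_of_nonneg hH1]
    rcases le_total y 1 with h1 | h1
    · have hsin : |Real.sin y| ≤ y := by
        have h := my_abs_sin_le_abs y
        rwa [abs_of_nonneg hy] at h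
      calc |Real.sin y| * H1fun α y ≤ y * H1fun α y :=
            mul_le_mul_of_nonneg_right hsin hH1
        _ ≤ Cβ * y ^ β := my_xH1_le hα hβ0 hβ2 hβα hy0
        _ ≤ Cβ * 1 := mul_le_mul_of_nonneg_left
            (Real.rpow_le_one hy h1 hβ0.le) hCβ0
        _ ≤ max C Cβ := by rw [mul_one]; exact le_max_right _ _
    · have hsin : |Real.sin y| ≤ 1 := abs_le.2 ⟨Real.neg_one_le_sin _, Real.sin_le_one _⟩
      calc |Real.sin y| * H1fun α y ≤ 1 * H1fun α y :=
            mul_le_mul_of_nonneg_right hsin hH1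
        _ = H1fun α y := one_mul _
        _ ≤ C / y := my_H1_le hα hy0
        _ ≤ C := by
            rw [div_le_iff₀ hy0]
            nlinarith
        _ ≤ max C Cβ := le_max_left _ _
  have hSle : ∀ y : ℝ, 0 ≤ y → |Hfun α y| ≤ S := by
    intro y hy
    have hbdd : BddAbove (Set.range fun x : Set.Ici (0:ℝ) => |Hfun α (x : ℝ)|) := by
      refine ⟨max C Cβ, ?_⟩
      rintro v ⟨⟨z, hz⟩, rfl⟩
      exact habs z hz
    exact le_ciSup hbdd ⟨y, hy⟩
  have key : ∀ ε : ℝ, 0 < ε → ∀ᶠ n : ℕ in atTop,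
      (⨆ x : Set.Icc (0:ℝ) (2 * (n : ℝ)),
        |(Polynomial.Chebyshev.T ℝ (2 * n + 1)).eval ((x : ℝ) / (2 * n)) * H1fun α (x : ℝ)|)
        ≤ S + ε := by
    intro ε hε
    set M := 1 + C / ε with hM
    have hM1 : (1:ℝ) ≤ M := by
      rw [hM]
      have : 0 ≤ C / ε := div_nonneg hC0 hε.le
      linarith
    have hM0 : (0:ℝ) < M := by linarith
    have hCM : C / M ≤ ε := by
      rw [div_le_iff₀ hM0]
      have he : ε * M = ε + C := by
        rw [hM]
        field_simp
      linarith
    set r := ε / (3 * (Cβ + 1)) with hr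
    have hr0 : 0 < r := by positivity
    set δ := min 1 (r ^ (1 / β)) with hδ
    have hδ0 : 0 < δ := lt_min one_pos (Real.rpow_pos_of_pos hr0 _)
    have hδ1 : δ ≤ 1 := min_le_left _ _
    have hδβ : 3 * (Cβ * δ ^ β) ≤ ε := by
      have h1 : δ ^ β ≤ (r ^ (1 / β)) ^ β :=
        Real.rpow_le_rpow hδ0.le (min_le_right _ _) hβ0.le
      have h2 : (r ^ (1 / β)) ^ β = r := by
        rw [← Real.rpow_mul hr0.le, one_div_mul_cancel hβ0.ne', Real.rpow_one]
      have h3 : Cβ * δ ^ β ≤ Cβ * r := mul_le_mul_of_nonneg_left (h1.trans_eq h2) hCβ0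
      have he : r * (3 * (Cβ + 1)) = ε := by
        rw [hr]
        field_simp
      nlinarith [hr0.le]
    have hev1 : ∀ᶠ n : ℕ in atTop, M ≤ (n:ℝ) :=
      tendsto_natCast_atTop_atTop.eventually_ge_atTop M
    have hev2 : ∀ᶠ n : ℕ in atTop, (M ^ 3 + M) * (C + 1) / (ε * δ) ≤ (n:ℝ) :=
      tendsto_natCast_atTop_atTop.eventually_ge_atTop _
    filter_upwards [hev1, hev2] with n hn1 hn2
    have hn1' : (1:ℝ) ≤ (n:ℝ) := le_trans hM1 hn1
    have hnn : 1 ≤ n := by exact_mod_cast hn1'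
    have h2n : (0:ℝ) < 2 * n := by linarith
    haveI : Nonempty (Set.Icc (0:ℝ) (2 * (n:ℝ))) :=
      ⟨⟨0, Set.left_mem_Icc.2 (by linarith)⟩⟩
    apply ciSup_le
    rintro ⟨x, hx0, hx2n⟩
    simp only
    rcases eq_or_lt_of_le hx0 with h | hx0'
    · rw [← h, my_H1_zero, mul_zero, abs_zero]
      linarith
    have hu0 : 0 ≤ x / (2 * (n:ℝ)) := by positivity
    have hu1 : x / (2 * (n:ℝ)) ≤ 1 := by
      rw [div_le_one h2n]
      exact hx2n
    have hH1nn : 0 ≤ H1fun α x := my_H1_nonneg α hx0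
    rw [abs_mul, abs_of_nonneg hH1nn]
    rcases le_total M x with hxM | hxM
    · have hT1 := my_T_le_one n hu0 hu1
      have hb : H1fun α x ≤ C / M := by
        apply (my_H1_le hα hx0').trans
        exact div_le_div_of_nonneg_left hC0 hM0 hxM
      calc |(Polynomial.Chebyshev.T ℝ (2 * n + 1)).eval (x / (2 * (n:ℝ)))| * H1fun α x
          ≤ 1 * (C / M) := mul_le_mul hT1 hb hH1nn one_pos.le
        _ = C / M := one_mul _
        _ ≤ ε := hCM
        _ ≤ S + ε := by linarith
    · rcases le_total x δ with hxδ | hxδ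
      · have hT3 := my_T_le_3x hnn hx0 hx2n
        have hx1 := my_xH1_le hα hβ0 hβ2 hβα hx0' (x := x)
        have hxb : x ^ β ≤ δ ^ β := Real.rpow_le_rpow hx0 hxδ hβ0.le
        calc |(Polynomial.Chebyshev.T ℝ (2 * n + 1)).eval (x / (2 * (n:ℝ)))| * H1fun α x
            ≤ (3 * x) * H1fun α x := mul_le_mul_of_nonneg_right hT3 hH1nn
          _ = 3 * (x * H1fun α x) := by ring
          _ ≤ 3 * (Cβ * x ^ β) := by linarith
          _ ≤ 3 * (Cβ * δ ^ β) := by nlinarith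
          _ ≤ ε := hδβ
          _ ≤ S + ε := by linarith
      · have hT := my_T_le_sin hnn hx0' hxM hn1
        have hH1C : H1fun α x ≤ C / δ := by
          apply (my_H1_le hα hx0').trans
          apply div_le_div_of_nonneg_left hC0 hδ0 hxδ
        have hM3 : (0:ℝ) < M ^ 3 + M := by positivity
        have hterm : (M ^ 3 + M) / (n:ℝ) * (C / δ) ≤ ε := by
          rw [div_mul_div_comm, div_le_iff₀ (by positivity)]
          have h5 : (M ^ 3 + M) * (C + 1) ≤ (n:ℝ) * (ε * δ) := by
            rw [div_le_iff₀ (by positivity)] at hn2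
            linarith
          nlinarith
        calc |(Polynomial.Chebyshev.T ℝ (2 * n + 1)).eval (x / (2 * (n:ℝ)))| * H1fun α x
            ≤ (|Real.sin x| + (M ^ 3 + M) / (n:ℝ)) * H1fun α x :=
              mul_le_mul_of_nonneg_right hT hH1nn
          _ = |Real.sin x| * H1fun α x + (M ^ 3 + M) / (n:ℝ) * H1fun α x := by ring
          _ ≤ |Hfun α x| + ε := by
              have e : |Hfun α x| = |Real.sin x| * H1fun α x := by
                rw [my_Hfun_eq, abs_mul, abs_of_nonneg hH1nn]
              have h6 : (M ^ 3 + M) / (n:ℝ) * H1fun α x ≤ (M ^ 3 + M) / (n:ℝ) * (C / δ) :=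
                mul_le_mul_of_nonneg_left hH1C (by positivity)
              linarith
          _ ≤ S + ε := by linarith [hSle x hx0]
  have hcb : IsCoboundedUnder (· ≤ ·) atTop
      (fun n : ℕ => ⨆ x : Set.Icc (0:ℝ) (2 * (n : ℝ)),
        |(Polynomial.Chebyshev.T ℝ (2 * n + 1)).eval ((x : ℝ) / (2 * n)) * H1fun α (x : ℝ)|) :=
    isCoboundedUnder_le_of_le atTop (fun n => Real.iSup_nonneg fun _ => abs_nonneg _)
  by_contra hcon
  push_neg at hcon
  have hd := Filter.limsup_le_of_le hcb
    (key ((Filter.limsup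
      (fun n : ℕ => ⨆ x : Set.Icc (0:ℝ) (2 * (n : ℝ)),
        |(Polynomial.Chebyshev.T ℝ (2 * n + 1)).eval ((x : ℝ) / (2 * n)) * H1fun α (x : ℝ)|)
      atTop - S) / 2) (by linarith))
  linarith
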